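/- Let K be a field of characteristic p and q = p^h. Let a, b, c, d ∈ K satisfy a^q = a, b^q = b, c^q = c, d^q = d and ad − bc ≠ 0. Let x ∈ K with cx + d ≠ 0 and x^q ≠ x, and set w = (ax + b)/(cx + d). Then w^q ≠ w and (w^{q^2} − w)^{q+1} / (w^q − w)^{q^2+1} = (x^{q^2} − x)^{q+1} / (x^q − x)^{q^2+1}. -/

import Mathlib

/-- Invariance of (x^(q²)−x)^(q+1)/(x^q−x)^(q²+1) under fractional linear maps
with coefficients fixed by the q-power Frobenius. -/
theorem pgl2_invariant (p h q : ℕ) (hp : p.Prime) (hh : 1 ≤ h) (hq : q = p ^ h)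
    (K : Type*) [Field K] [CharP K p]
    (a b c d : K) (ha : a ^ q = a) (hb : b ^ q = b) (hc : c ^ q = c) (hd : d ^ q = d)
    (hdet : a * d - b * c ≠ 0)
    (x : K) (hden : c * x + d ≠ 0) (hx : x ^ q ≠ x)
    (w : K) (hw : w = (a * x + b) / (c * x + d)) :
    w ^ q ≠ w ∧
      (w ^ q ^ 2 - w) ^ (q + 1) / (w ^ q - w) ^ (q ^ 2 + 1) =
        (x ^ q ^ 2 - x) ^ (q + 1) / (x ^ q - x) ^ (q ^ 2 + 1) := by
  haveI : ExpChar K p := .prime hp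
  have hadd : ∀ u v : K, (u + v) ^ q = u ^ q + v ^ q := by
    intro u v; rw [hq]; exact add_pow_expChar_pow u v p h
  have hsub : ∀ u v : K, (u - v) ^ q = u ^ q - v ^ q := by
    intro u v; rw [hq]; exact sub_pow_expChar_pow u v h
  set Δ : K := a * d - b * c with hΔ
  have hΔq : Δ ^ q = Δ := by
    rw [hΔ, hsub, mul_pow, mul_pow, ha, hb, hc, hd]
  -- general step
  have hDq : ∀ y : K, (c * y + d) ^ q = c * y ^ q + d := by
    intro y; rw [hadd, mul_pow, hc, hd]
  have hDq2 : ∀ y : K, c * y + d ≠ 0 → c * y ^ q + d ≠ 0 := by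
    intro y hy; rw [← hDq]; exact pow_ne_zero _ hy
  have step : ∀ y : K, c * y + d ≠ 0 →
      ((a * y + b) / (c * y + d)) ^ q = (a * y ^ q + b) / (c * y ^ q + d) := by
    intro y hy
    rw [div_pow, hadd, mul_pow, ha, hb, hDq]
  have hden2 : c * x ^ q + d ≠ 0 := hDq2 x hden
  have hden3 : c * (x ^ q) ^ q + d ≠ 0 := hDq2 _ hden2
  have hwq : w ^ q = (a * x ^ q + b) / (c * x ^ q + d) := by
    rw [hw, step x hden]
  have hwq2 : w ^ q ^ 2 = (a * x ^ q ^ 2 + b) / (c * x ^ q ^ 2 + d) := by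
    have : w ^ q ^ 2 = (w ^ q) ^ q := by rw [← pow_mul, sq]
    rw [this, hwq, step _ hden2, ← pow_mul, ← sq]
  -- difference formula
  have diff : ∀ y z : K, c * y + d ≠ 0 → c * z + d ≠ 0 →
      (a * y + b) / (c * y + d) - (a * z + b) / (c * z + d)
        = Δ * (y - z) / ((c * y + d) * (c * z + d)) := by
    intro y z hy hz
    rw [div_sub_div _ _ hy hz, hΔ]
    ring
  have h1 : w ^ q - w = Δ * (x ^ q - x) / ((c * x + d) ^ q * (c * x + d)) := by
    rw [hwq, hw, diff _ _ hden2 hden, hDq]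
  have h2 : w ^ q ^ 2 - w = Δ * (x ^ q ^ 2 - x) / ((c * x + d) ^ q ^ 2 * (c * x + d)) := by
    have hDqq : (c * x + d) ^ q ^ 2 = c * x ^ q ^ 2 + d := by
      rw [sq, pow_mul, hDq, hDq, ← pow_mul, ← sq]
    have hden4 : c * x ^ q ^ 2 + d ≠ 0 := by
      rw [← hDqq]; exact pow_ne_zero _ hden
    rw [hwq2, hw, diff _ _ hden4 hden, hDqq]
  have hs : x ^ q - x ≠ 0 := sub_ne_zero.mpr hx
  have hne : w ^ q - w ≠ 0 := by
    rw [h1]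
    exact div_ne_zero (mul_ne_zero hdet hs)
      (mul_ne_zero (pow_ne_zero _ hden) hden)
  refine ⟨sub_ne_zero.mp hne, ?_⟩
  rw [h1, h2]
  have hΔ2a : Δ ^ (q + 1) = Δ ^ 2 := by rw [pow_succ, hΔq, sq]
  have hΔ2b : Δ ^ (q ^ 2 + 1) = Δ ^ 2 := by
    rw [pow_succ, sq q, pow_mul, hΔq, hΔq, sq]
  simp only [div_pow, mul_pow]
  rw [hΔ2a, hΔ2b]
  have hP : ∀ n : ℕ, (c * x + d) ^ n ≠ 0 := fun n => pow_ne_zero _ hden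
  have hs' : (x ^ q - x) ^ (q ^ 2 + 1) ≠ 0 := pow_ne_zero _ hs
  have hΔ' : Δ ^ 2 ≠ 0 := pow_ne_zero _ hdet
  rw [div_div_div_eq, div_eq_div_iff (mul_ne_zero (mul_ne_zero (pow_ne_zero _ (hP _)) (hP _))
    (mul_ne_zero hΔ' hs')) hs']
  ring
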